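/- Let F : C → D be an exact functor between abelian categories which has a right adjoint G : D → C. Then F is an exact quotient functor (i.e., F induces an equivalence C/(Ker F) → D, where C/(Ker F) is the Gabriel quotient) if and only if G is fully faithful. -/

import Mathlib

open CategoryTheory CategoryTheory.Limits

universe v₁ v₂ u₁ u₂

/-- The class of morphisms of `C` whose kernel and cokernel are killed by `F`;
the Gabriel quotient `C/(Ker F)` is the localization of `C` at this class. -/
def gabrielW {C : Type u₁} [Category.{v₁} C] [Abelian C]
    {D : Type u₂} [Category.{v₂} D] [Abelian D] (F : C ⥤ D) :
    MorphismProperty C :=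
  fun _ _ φ => IsZero (F.obj (kernel φ)) ∧ IsZero (F.obj (cokernel φ))

/-- In an abelian category, a morphism is an isomorphism iff its kernel and cokernel vanish. -/
lemma isIso_iff_isZero_kernel_cokernel {D : Type u₂} [Category.{v₂} D] [Abelian D]
    {X Y : D} (f : X ⟶ Y) :
    IsIso f ↔ IsZero (kernel f) ∧ IsZero (cokernel f) := by
  constructor
  · intro hf
    exact ⟨(isZero_zero D).of_iso (kernel.ofMono f),
      (isZero_zero D).of_iso (cokernel.ofEpi f)⟩
  · rintro ⟨h₁, h₂⟩
    have : Mono f := Preadditive.mono_of_kernel_iso_zero (h₁.iso (isZero_zero D))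
    have : Epi f := Preadditive.epi_of_cokernel_iso_zero (h₂.iso (isZero_zero D))
    exact isIso_of_mono_of_epi f

/-- For an exact functor `F`, the Gabriel class is the inverse image of isomorphisms. -/
lemma gabrielW_eq {C : Type u₁} [Category.{v₁} C] [Abelian C]
    {D : Type u₂} [Category.{v₂} D] [Abelian D] (F : C ⥤ D)
    [PreservesFiniteLimits F] [PreservesFiniteColimits F] :
    gabrielW F = (MorphismProperty.isomorphisms D).inverseImage F := by
  ext X Y φ
  have e₁ : F.obj (kernel φ) ≅ kernel (F.map φ) := PreservesKernel.iso F φ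
  have e₂ : F.obj (cokernel φ) ≅ cokernel (F.map φ) := PreservesCokernel.iso F φ
  show (IsZero (F.obj (kernel φ)) ∧ IsZero (F.obj (cokernel φ))) ↔ IsIso (F.map φ)
  rw [isIso_iff_isZero_kernel_cokernel]
  exact and_congr ⟨fun h => h.of_iso e₁.symm, fun h => h.of_iso e₁⟩
    ⟨fun h => h.of_iso e₂.symm, fun h => h.of_iso e₂⟩

/-- An exact functor `F` between abelian categories with right adjoint `G` is an exact
quotient functor (it induces an equivalence `C/(Ker F) ≌ D` from the Gabriel quotient)
if and only if `G` is fully faithful. -/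
theorem stmt3 {C : Type u₁} [Category.{v₁} C] [Abelian C]
    {D : Type u₂} [Category.{v₂} D] [Abelian D]
    (F : C ⥤ D) (G : D ⥤ C) (adj : F ⊣ G)
    [PreservesFiniteLimits F] [PreservesFiniteColimits F] :
    F.IsLocalization (gabrielW F) ↔ (G.Full ∧ G.Faithful) := by
  rw [gabrielW_eq F]
  constructor
  · intro h
    -- show the counit of the adjunction is an isomorphism, using that `F` is a localization
    have full := Localization.full_whiskeringLeft F
      ((MorphismProperty.isomorphisms D).inverseImage F) D
    obtain ⟨σ, hσ⟩ := full.map_surjective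
      (X := 𝟭 D) (Y := G ⋙ F) (Functor.whiskerRight adj.unit F)
    have hσ' : ∀ X : C, σ.app (F.obj X) = F.map (adj.unit.app X) := fun X =>
      congr_arg (fun τ => NatTrans.app τ X) hσ
    have h₁ : σ ≫ adj.counit = 𝟙 (𝟭 D) := by
      apply Localization.natTrans_ext F ((MorphismProperty.isomorphisms D).inverseImage F)
      intro X
      simp [hσ' X, adj.left_triangle_components]
    have h₂ : adj.counit ≫ σ = 𝟙 (G ⋙ F) := by
      apply Localization.natTrans_ext F ((MorphismProperty.isomorphisms D).inverseImage F)
      intro X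
      have nat := σ.naturality (adj.counit.app (F.obj X))
      simp only [NatTrans.comp_app, NatTrans.id_app, Functor.comp_obj, Functor.id_obj]
      rw [show adj.counit.app (F.obj X) ≫ σ.app (F.obj X) =
        (𝟭 D).map (adj.counit.app (F.obj X)) ≫ σ.app ((𝟭 D).obj (F.obj X)) from rfl,
        nat, show σ.app ((G ⋙ F).obj (F.obj X)) =
          F.map (adj.unit.app (G.obj (F.obj X))) from hσ' _]
      simp only [Functor.comp_map, ← F.map_comp, adj.right_triangle_components, F.map_id]
      exact F.map_id _
    have : IsIso adj.counit := ⟨σ, h₂, h₁⟩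
    have ff := adj.fullyFaithfulROfIsIsoCounit
    exact ⟨ff.full, ff.faithful⟩
  · rintro ⟨hfull, hfaithful⟩
    exact adj.isLocalization
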